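/- Let I ⊆ ℝ be an open interval, V : ℝ → ℝ differentiable on I, and E₀, E ∈ ℝ. Let ψ₀ : ℝ → ℝ be twice differentiable on I with ψ₀(x) ≠ 0 on I and -ψ₀'' + V·ψ₀ = E₀·ψ₀ on I, and let ψ : ℝ → ℝ be twice differentiable on I with -ψ'' + V·ψ = E·ψ on I. Then the function φ = -ψ' + (ψ₀'/ψ₀)·ψ is twice differentiable on I and satisfies -φ'' + (V - 2·(ψ₀'/ψ₀)')·φ = E·φ on I. -/

import Mathlib

/-- **First-order intertwining (Darboux) transformation of eigenfunctions.**
Let `ψ₀` be a nonvanishing twice differentiable solution of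
`-ψ₀'' + Vψ₀ = E₀ψ₀` on the open interval `I`, where `V` is differentiable
on `I`, and let `ψ` be a twice differentiable solution of `-ψ'' + Vψ = Eψ`
on `I`. Then `φ = -ψ' + (ψ₀'/ψ₀)ψ` is twice differentiable on `I` and
satisfies `-φ'' + (V - 2(ψ₀'/ψ₀)')φ = Eφ` on `I`. -/
theorem darboux_transformation
    (I : Set ℝ) (hI : IsOpen I)
    (V : ℝ → ℝ) (hV : ∀ x ∈ I, DifferentiableAt ℝ V x)
    (E₀ E : ℝ)
    (ψ₀ ψ₀' ψ₀'' ψ ψ' ψ'' : ℝ → ℝ)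
    (hψ₀ : ∀ x ∈ I, HasDerivAt ψ₀ (ψ₀' x) x)
    (hψ₀' : ∀ x ∈ I, HasDerivAt ψ₀' (ψ₀'' x) x)
    (hψ : ∀ x ∈ I, HasDerivAt ψ (ψ' x) x)
    (hψ' : ∀ x ∈ I, HasDerivAt ψ' (ψ'' x) x)
    (hψ₀0 : ∀ x ∈ I, ψ₀ x ≠ 0)
    (hS₀ : ∀ x ∈ I, -ψ₀'' x + V x * ψ₀ x = E₀ * ψ₀ x)
    (hS : ∀ x ∈ I, -ψ'' x + V x * ψ x = E * ψ x) :
    (∀ x ∈ I,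
      DifferentiableAt ℝ (fun y => -ψ' y + (ψ₀' y / ψ₀ y) * ψ y) x) ∧
    (∀ x ∈ I,
      DifferentiableAt ℝ
        (deriv (fun y => -ψ' y + (ψ₀' y / ψ₀ y) * ψ y)) x) ∧
    (∀ x ∈ I,
      -(deriv (deriv (fun y => -ψ' y + (ψ₀' y / ψ₀ y) * ψ y)) x)
          + (V x - 2 * deriv (fun y => ψ₀' y / ψ₀ y) x)
            * (-ψ' x + (ψ₀' x / ψ₀ x) * ψ x)
        = E * (-ψ' x + (ψ₀' x / ψ₀ x) * ψ x)) := by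
  -- w = ψ₀'/ψ₀ satisfies w' = V - E₀ - w²
  have hwD : ∀ x ∈ I, HasDerivAt (fun y => ψ₀' y / ψ₀ y)
      (V x - E₀ - (ψ₀' x / ψ₀ x) ^ 2) x := by
    intro x hx
    have h := (hψ₀' x hx).div (hψ₀ x hx) (hψ₀0 x hx)
    refine h.congr_deriv ?_
    have h0 := hS₀ x hx
    have hne := hψ₀0 x hx
    have h1 : ψ₀'' x = V x * ψ₀ x - E₀ * ψ₀ x := by linarith
    rw [h1]; field_simp
  -- φ' = (E - E₀ - w²)ψ + wψ'
  have hφD : ∀ x ∈ I, HasDerivAt (fun y => -ψ' y + (ψ₀' y / ψ₀ y) * ψ y)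
      ((E - E₀ - (ψ₀' x / ψ₀ x) ^ 2) * ψ x + (ψ₀' x / ψ₀ x) * ψ' x) x := by
    intro x hx
    have h := ((hψ' x hx).neg).add ((hwD x hx).mul (hψ x hx))
    refine h.congr_deriv ?_
    have hs := hS x hx
    have h1 : ψ'' x = V x * ψ x - E * ψ x := by linarith
    rw [h1]; ring
  have hderivφ : ∀ x ∈ I, deriv (fun y => -ψ' y + (ψ₀' y / ψ₀ y) * ψ y) x
      = (E - E₀ - (ψ₀' x / ψ₀ x) ^ 2) * ψ x + (ψ₀' x / ψ₀ x) * ψ' x :=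
    fun x hx => (hφD x hx).deriv
  -- derivative of g = (E - E₀ - w²)ψ + wψ'
  have hgD : ∀ x ∈ I, HasDerivAt
      (fun y => (E - E₀ - (ψ₀' y / ψ₀ y) ^ 2) * ψ y + (ψ₀' y / ψ₀ y) * ψ' y)
      ((0 - 2 * (ψ₀' x / ψ₀ x) ^ 1 * (V x - E₀ - (ψ₀' x / ψ₀ x) ^ 2)) * ψ x
        + (E - E₀ - (ψ₀' x / ψ₀ x) ^ 2) * ψ' x
        + ((V x - E₀ - (ψ₀' x / ψ₀ x) ^ 2) * ψ' x + (ψ₀' x / ψ₀ x) * ψ'' x)) x := by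
    intro x hx
    exact (((hasDerivAt_const x (E - E₀)).sub ((hwD x hx).pow 2)).mul (hψ x hx)).add
      (((hwD x hx).mul (hψ' x hx)))
  -- the second derivative of φ
  have hφ2 : ∀ x ∈ I, HasDerivAt (deriv (fun y => -ψ' y + (ψ₀' y / ψ₀ y) * ψ y))
      ((0 - 2 * (ψ₀' x / ψ₀ x) ^ 1 * (V x - E₀ - (ψ₀' x / ψ₀ x) ^ 2)) * ψ x
        + (E - E₀ - (ψ₀' x / ψ₀ x) ^ 2) * ψ' x
        + ((V x - E₀ - (ψ₀' x / ψ₀ x) ^ 2) * ψ' x + (ψ₀' x / ψ₀ x) * ψ'' x)) x := by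
    intro x hx
    refine (hgD x hx).congr_of_eventuallyEq ?_
    filter_upwards [hI.mem_nhds hx] with y hy using hderivφ y hy
  refine ⟨fun x hx => (hφD x hx).differentiableAt,
    fun x hx => (hφ2 x hx).differentiableAt, fun x hx => ?_⟩
  rw [(hφ2 x hx).deriv, (hwD x hx).deriv]
  have hs := hS x hx
  have h1 : ψ'' x = V x * ψ x - E * ψ x := by linarith
  rw [h1]; ring
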